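/- In a dagger category, †-Drazin inverses are unique: if g : B ⟶ A and h : B ⟶ A are both †-Drazin inverses of a map f : A ⟶ B, then g = h. -/
import Mathlib


open CategoryTheory

universe v u

/-- A dagger on a category: an identity-on-objects contravariant involution. -/
structure Dagger (C : Type u) [Category.{v} C] where
  dag : ∀ {X Y : C}, (X ⟶ Y) → (Y ⟶ X)
  dag_id : ∀ X : C, dag (𝟙 X) = 𝟙 X
  dag_comp : ∀ {X Y Z : C} (f : X ⟶ Y) (g : Y ⟶ Z), dag (f ≫ g) = dag g ≫ dag f
  dag_dag : ∀ {X Y : C} (f : X ⟶ Y), dag (dag f) = f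

/-- Iterated composition power of an endomorphism, with `cpow x 0 = 𝟙 A`. -/
def cpow {C : Type u} [Category.{v} C] {A : C} (x : A ⟶ A) : ℕ → (A ⟶ A)
  | 0 => 𝟙 A
  | n + 1 => cpow x n ≫ x

/-- `p` is a †-Drazin inverse of `f`. -/
def IsDagDrazinInv {C : Type u} [Category.{v} C] (D : Dagger C)
    {A B : C} (f : A ⟶ B) (p : B ⟶ A) : Prop :=
  (∃ k : ℕ, cpow (f ≫ D.dag f) k ≫ f ≫ p = cpow (f ≫ D.dag f) k ∧
    p ≫ f ≫ cpow (D.dag f ≫ f) k = cpow (D.dag f ≫ f) k) ∧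
  p ≫ f ≫ p = p ∧
  D.dag (f ≫ p) = f ≫ p ∧
  D.dag (p ≫ f) = p ≫ f

section Aux

variable {C : Type u} [Category.{v} C]

lemma cpow_succ' {A : C} (x : A ⟶ A) (n : ℕ) : cpow x (n + 1) = cpow x n ≫ x := rfl

lemma cpow_succ_left {A : C} (x : A ⟶ A) (n : ℕ) : cpow x (n + 1) = x ≫ cpow x n := by
  induction n with
  | zero => simp [cpow]
  | succ n ih =>
      calc cpow x (n + 1 + 1) = (x ≫ cpow x n) ≫ x := by rw [← ih]; rfl
        _ = x ≫ cpow x (n + 1) := by rw [Category.assoc]; rfl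

lemma comm_cpow {A : C} {a x : A ⟶ A} (h : a ≫ x = x ≫ a) (n : ℕ) :
    a ≫ cpow x n = cpow x n ≫ a := by
  induction n with
  | zero => simp [cpow]
  | succ n ih =>
      calc a ≫ cpow x (n + 1) = (a ≫ cpow x n) ≫ x := (Category.assoc _ _ _).symm
        _ = (cpow x n ≫ a) ≫ x := by rw [ih]
        _ = cpow x n ≫ x ≫ a := by rw [Category.assoc, ← h]
        _ = cpow x (n + 1) ≫ a := by rw [← Category.assoc]; rfl

lemma idem_cpow {A : C} {e : A ⟶ A} (h : e ≫ e = e) (n : ℕ) : cpow e (n + 1) = e := by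
  induction n with
  | zero => simp [cpow]
  | succ n ih => rw [cpow_succ', ih, h]

lemma cpow_comp {A : C} {a x : A ⟶ A} (h : a ≫ x = x ≫ a) (n : ℕ) :
    cpow (a ≫ x) n = cpow a n ≫ cpow x n := by
  induction n with
  | zero => simp [cpow]
  | succ n ih =>
      rw [cpow_succ', ih, cpow_succ', cpow_succ']
      simp only [Category.assoc]
      rw [← Category.assoc (cpow x n) a x, ← comm_cpow h n, Category.assoc]

lemma cpow_cpow_comm {A : C} {a x : A ⟶ A} (h : a ≫ x = x ≫ a) (m n : ℕ) :
    cpow a m ≫ cpow x n = cpow x n ≫ cpow a m :=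
  (comm_cpow (comm_cpow h n).symm m).symm

lemma dag_cpow (D : Dagger C) {A : C} {x : A ⟶ A} (hx : D.dag x = x) (n : ℕ) :
    D.dag (cpow x n) = cpow x n := by
  induction n with
  | zero => simp [cpow, D.dag_id]
  | succ n ih =>
      calc D.dag (cpow x (n + 1)) = D.dag (cpow x n ≫ x) := rfl
        _ = x ≫ cpow x n := by rw [D.dag_comp, hx, ih]
        _ = cpow x (n + 1) := (cpow_succ_left x n).symm

/-- Classical uniqueness of Drazin inverses of an endomorphism. -/
lemma drazin_unique {A : C} (x a b : A ⟶ A)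
    (ca : a ≫ x = x ≫ a) (cb : b ≫ x = x ≫ b)
    (ia : a ≫ x ≫ a = a) (ib : b ≫ x ≫ b = b)
    (K : ℕ) (ea : cpow x (K + 1) ≫ a = cpow x K) (eb : cpow x (K + 1) ≫ b = cpow x K) :
    a = b := by
  have iax : (a ≫ x) ≫ (a ≫ x) = a ≫ x := by
    simp only [Category.assoc]; rw [← Category.assoc, ← Category.assoc,
      Category.assoc a x a, ia]
  have ixb : (x ≫ b) ≫ (x ≫ b) = x ≫ b := by
    simp only [Category.assoc]; rw [ib]
  have ha : a = a ≫ x ≫ b := by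
    calc a = cpow (a ≫ x) (K + 1) ≫ a := by
            rw [idem_cpow iax, Category.assoc, ia]
      _ = cpow a (K + 1) ≫ cpow x (K + 1) ≫ a := by rw [cpow_comp ca, Category.assoc]
      _ = cpow a (K + 1) ≫ cpow x K := by rw [ea]
      _ = cpow a (K + 1) ≫ cpow x (K + 1) ≫ b := by rw [eb]
      _ = cpow (a ≫ x) (K + 1) ≫ b := by rw [cpow_comp ca, Category.assoc]
      _ = a ≫ x ≫ b := by rw [idem_cpow iax, Category.assoc]
  have hb : b = a ≫ x ≫ b := by
    have key : cpow (x ≫ b) (K + 1) = cpow x (K + 1) ≫ cpow b (K + 1) := by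
      have : x ≫ b = b ≫ x := cb.symm
      rw [this, cpow_comp cb, cpow_cpow_comm cb]
    calc b = b ≫ cpow (x ≫ b) (K + 1) := by rw [idem_cpow ixb]; exact ib.symm
      _ = (b ≫ cpow x (K + 1)) ≫ cpow b (K + 1) := by rw [key, ← Category.assoc]
      _ = (cpow x (K + 1) ≫ b) ≫ cpow b (K + 1) := by rw [comm_cpow cb]
      _ = cpow x K ≫ cpow b (K + 1) := by rw [eb]
      _ = (cpow x (K + 1) ≫ a) ≫ cpow b (K + 1) := by rw [ea]
      _ = (a ≫ cpow x (K + 1)) ≫ cpow b (K + 1) := by rw [comm_cpow ca]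
      _ = a ≫ cpow (x ≫ b) (K + 1) := by rw [key, Category.assoc]
      _ = a ≫ x ≫ b := by rw [idem_cpow ixb]
  exact ha.trans hb.symm

/-- The key facts extracted from a †-Drazin inverse `p` of `f`:
`p ≫ p†` is a Drazin inverse of `f† ≫ f`, and `p† ≫ p` is a Drazin inverse of
`f ≫ f†`, with the relevant products computed. -/
lemma dagDrazin_facts (D : Dagger C) {A B : C} (f : A ⟶ B) (p : B ⟶ A)
    (hp : IsDagDrazinInv D f p) :
    ∃ k : ℕ,
      ((p ≫ D.dag p) ≫ (D.dag f ≫ f) = p ≫ f) ∧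
      ((D.dag f ≫ f) ≫ (p ≫ D.dag p) = p ≫ f) ∧
      ((p ≫ D.dag p) ≫ (D.dag f ≫ f) ≫ (p ≫ D.dag p) = p ≫ D.dag p) ∧
      (∀ m, cpow (D.dag f ≫ f) (k + m + 1) ≫ (p ≫ D.dag p) = cpow (D.dag f ≫ f) (k + m)) ∧
      ((D.dag p ≫ p) ≫ (f ≫ D.dag f) = f ≫ p) ∧
      ((f ≫ D.dag f) ≫ (D.dag p ≫ p) = f ≫ p) ∧
      ((D.dag p ≫ p) ≫ (f ≫ D.dag f) ≫ (D.dag p ≫ p) = D.dag p ≫ p) ∧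
      (∀ m, cpow (f ≫ D.dag f) (k + m + 1) ≫ (D.dag p ≫ p) = cpow (f ≫ D.dag f) (k + m)) := by
  obtain ⟨⟨k, h1a, h1b⟩, h2, h3, h4⟩ := hp
  have e1 : D.dag p ≫ D.dag f = f ≫ p := (D.dag_comp f p).symm.trans h3
  have e2 : D.dag f ≫ D.dag p = p ≫ f := (D.dag_comp p f).symm.trans h4
  have h2' := reassoc_of% h2
  have e1' := reassoc_of% e1
  have e2' := reassoc_of% e2
  have e1s' := reassoc_of% e1.symm
  have e2s' := reassoc_of% e2.symm
  -- z := p ≫ p†, y := f† ≫ f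
  have zy : (p ≫ D.dag p) ≫ (D.dag f ≫ f) = p ≫ f := by
    simp only [Category.assoc]; rw [e1', h2']
  have yz : (D.dag f ≫ f) ≫ (p ≫ D.dag p) = p ≫ f := by
    simp only [Category.assoc]; rw [e1s', e2', e2, h2']
  have zyz : (p ≫ D.dag p) ≫ (D.dag f ≫ f) ≫ (p ≫ D.dag p) = p ≫ D.dag p := by
    simp only [Category.assoc]; rw [e1', h2', h2']
  -- w := p† ≫ p, x := f ≫ f†
  have wx : (D.dag p ≫ p) ≫ (f ≫ D.dag f) = f ≫ p := by
    simp only [Category.assoc]; rw [e2s', e1', e1, h2]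
  have xw : (f ≫ D.dag f) ≫ (D.dag p ≫ p) = f ≫ p := by
    simp only [Category.assoc]; rw [e2', h2]
  have wxw : (D.dag p ≫ p) ≫ (f ≫ D.dag f) ≫ (D.dag p ≫ p) = D.dag p ≫ p := by
    simp only [Category.assoc]; rw [e2', h2, h2]
  -- base power identity for y, obtained by daggering h1b
  have hy : D.dag (D.dag f ≫ f) = D.dag f ≫ f := by rw [D.dag_comp, D.dag_dag]
  have hcy := dag_cpow D hy k
  have hbasey : cpow (D.dag f ≫ f) k ≫ p ≫ f = cpow (D.dag f ≫ f) k := by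
    have hd := congrArg D.dag h1b
    rw [D.dag_comp p (f ≫ cpow (D.dag f ≫ f) k),
      D.dag_comp f (cpow (D.dag f ≫ f) k), hcy] at hd
    simp only [Category.assoc] at hd
    rw [e2] at hd
    exact hd
  have hmonoy : ∀ m, cpow (D.dag f ≫ f) (k + m) ≫ p ≫ f = cpow (D.dag f ≫ f) (k + m) := by
    intro m
    induction m with
    | zero => simpa using hbasey
    | succ m ih => rw [show k + (m + 1) = (k + m) + 1 from rfl, cpow_succ_left,
        Category.assoc, ih]
  have powy : ∀ m, cpow (D.dag f ≫ f) (k + m + 1) ≫ (p ≫ D.dag p) =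
      cpow (D.dag f ≫ f) (k + m) := by
    intro m
    calc cpow (D.dag f ≫ f) (k + m + 1) ≫ (p ≫ D.dag p)
        = cpow (D.dag f ≫ f) (k + m) ≫ ((D.dag f ≫ f) ≫ (p ≫ D.dag p)) := by
          rw [cpow_succ', Category.assoc]
      _ = cpow (D.dag f ≫ f) (k + m) ≫ (p ≫ f) := by rw [yz]
      _ = cpow (D.dag f ≫ f) (k + m) := hmonoy m
  -- powers for x, from h1a
  have hmonox : ∀ m, cpow (f ≫ D.dag f) (k + m) ≫ f ≫ p = cpow (f ≫ D.dag f) (k + m) := by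
    intro m
    induction m with
    | zero => simpa using h1a
    | succ m ih => rw [show k + (m + 1) = (k + m) + 1 from rfl, cpow_succ_left,
        Category.assoc, ih]
  have powx : ∀ m, cpow (f ≫ D.dag f) (k + m + 1) ≫ (D.dag p ≫ p) =
      cpow (f ≫ D.dag f) (k + m) := by
    intro m
    calc cpow (f ≫ D.dag f) (k + m + 1) ≫ (D.dag p ≫ p)
        = cpow (f ≫ D.dag f) (k + m) ≫ ((f ≫ D.dag f) ≫ (D.dag p ≫ p)) := by
          rw [cpow_succ', Category.assoc]
      _ = cpow (f ≫ D.dag f) (k + m) ≫ (f ≫ p) := by rw [xw]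
      _ = cpow (f ≫ D.dag f) (k + m) := hmonox m
  exact ⟨k, zy, yz, zyz, powy, wx, xw, wxw, powx⟩

end Aux

/-- †-Drazin inverses are unique. -/
theorem dagDrazinInv_unique {C : Type u} [Category.{v} C] (D : Dagger C)
    {A B : C} (f : A ⟶ B) (g h : B ⟶ A)
    (hg : IsDagDrazinInv D f g) (hh : IsDagDrazinInv D f h) : g = h := by
  obtain ⟨k₁, zgy, yzg, zgi, zgpow, wgx, xwg, wgi, wgpow⟩ := dagDrazin_facts D f g hg
  obtain ⟨k₂, zhy, yzh, zhi, zhpow, whx, xwh, whi, whpow⟩ := dagDrazin_facts D f h hh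
  set K := max k₁ k₂ with hK
  have hk₁ : k₁ + (K - k₁) = K := Nat.add_sub_cancel' (le_max_left _ _)
  have hk₂ : k₂ + (K - k₂) = K := Nat.add_sub_cancel' (le_max_right _ _)
  have zgpK : cpow (D.dag f ≫ f) (K + 1) ≫ (g ≫ D.dag g) = cpow (D.dag f ≫ f) K := by
    have := zgpow (K - k₁); rwa [hk₁] at this
  have zhpK : cpow (D.dag f ≫ f) (K + 1) ≫ (h ≫ D.dag h) = cpow (D.dag f ≫ f) K := by
    have := zhpow (K - k₂); rwa [hk₂] at this
  have wgpK : cpow (f ≫ D.dag f) (K + 1) ≫ (D.dag g ≫ g) = cpow (f ≫ D.dag f) K := by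
    have := wgpow (K - k₁); rwa [hk₁] at this
  have whpK : cpow (f ≫ D.dag f) (K + 1) ≫ (D.dag h ≫ h) = cpow (f ≫ D.dag f) K := by
    have := whpow (K - k₂); rwa [hk₂] at this
  have hz : g ≫ D.dag g = h ≫ D.dag h :=
    drazin_unique (D.dag f ≫ f) (g ≫ D.dag g) (h ≫ D.dag h)
      (zgy.trans yzg.symm) (zhy.trans yzh.symm) zgi zhi K zgpK zhpK
  have hw : D.dag g ≫ g = D.dag h ≫ h :=
    drazin_unique (f ≫ D.dag f) (D.dag g ≫ g) (D.dag h ≫ h)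
      (wgx.trans xwg.symm) (whx.trans xwh.symm) wgi whi K wgpK whpK
  have hq : g ≫ f = h ≫ f := by rw [← zgy, hz, zhy]
  have he : f ≫ g = f ≫ h := by rw [← xwg, hw, xwh]
  calc g = g ≫ f ≫ g := hg.2.1.symm
    _ = g ≫ f ≫ h := by rw [he]
    _ = h ≫ f ≫ h := by rw [← Category.assoc, hq, Category.assoc]
    _ = h := hh.2.1
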